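/- Let Λ be the Lobachevsky function. Then 2·Λ(π/6) = 3·Λ(π/3). -/

import Mathlib

open Real MeasureTheory intervalIntegral

/-- The Lobachevsky function `Λ(θ) = −∫₀^θ log|2 sin t| dt`. -/
noncomputable def lobachevsky (θ : ℝ) : ℝ :=
  -∫ t in (0:ℝ)..θ, Real.log |2 * Real.sin t|

namespace LobAux

noncomputable def f (t : ℝ) : ℝ := Real.log |2 * Real.sin t|

noncomputable def F (θ : ℝ) : ℝ := ∫ t in (0:ℝ)..θ, f t

lemma lob_eq (θ : ℝ) : lobachevsky θ = -F θ := rfl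

/-- `-log t ≤ 2 / √t` for `t > 0`. -/
lemma neg_log_le (t : ℝ) (ht : 0 < t) : -Real.log t ≤ 2 * t ^ (-(1:ℝ)/2) := by
  have hst : 0 < Real.sqrt t := Real.sqrt_pos.2 ht
  have h1 : Real.log ((Real.sqrt t)⁻¹) ≤ (Real.sqrt t)⁻¹ - 1 :=
    Real.log_le_sub_one_of_pos (by positivity)
  have h2 : Real.log ((Real.sqrt t)⁻¹) = -(Real.log t / 2) := by
    rw [Real.log_inv, Real.log_sqrt ht.le]
  have h3 : t ^ (-(1:ℝ)/2) = (Real.sqrt t)⁻¹ := by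
    rw [Real.sqrt_eq_rpow, ← Real.rpow_neg ht.le]
    norm_num
  rw [h3]
  nlinarith [h1, h2, hst]

/-- Integrability of `log |2 sin t|` on `(0, π/2]`. -/
lemma integrableOn_f : IntegrableOn f (Set.Ioc 0 (π/2)) volume := by
  have hmeas : AEStronglyMeasurable f (volume.restrict (Set.Ioc 0 (π/2))) := by
    have : Measurable f :=
      Real.measurable_log.comp ((continuous_const.mul continuous_sin).measurable.abs)
    exact this.aestronglyMeasurable
  have hrpow : IntegrableOn (fun t : ℝ => t ^ (-(1:ℝ)/2)) (Set.Ioc 0 (π/2)) volume := by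
    have := (intervalIntegral.intervalIntegrable_rpow' (a := 0) (b := π/2)
      (r := -(1:ℝ)/2) (by norm_num)).1
    simpa using this
  have hg : IntegrableOn (fun t : ℝ => Real.log 2 + 2 * t ^ (-(1:ℝ)/2))
      (Set.Ioc 0 (π/2)) volume := by
    exact ((integrableOn_const measure_Ioc_lt_top.ne : IntegrableOn (fun _ : ℝ => Real.log 2) (Set.Ioc 0 (π/2)) volume)).add (hrpow.const_mul 2)
  refine hg.integrable.mono' hmeas ?_
  rw [ae_restrict_iff' measurableSet_Ioc]
  filter_upwards with t ht
  obtain ⟨ht0, ht2⟩ := ht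
  have hπ : (0:ℝ) < π := Real.pi_pos
  have hsin : 0 < Real.sin t := Real.sin_pos_of_pos_of_lt_pi ht0 (by linarith)
  have habs : |2 * Real.sin t| = 2 * Real.sin t := abs_of_pos (by linarith)
  have hrp : 0 ≤ t ^ (-(1:ℝ)/2) := Real.rpow_nonneg ht0.le _
  have hub : f t ≤ Real.log 2 := by
    show Real.log |2 * Real.sin t| ≤ Real.log 2
    rw [habs]
    apply Real.log_le_log (by linarith)
    nlinarith [Real.sin_le_one t]
  have hjordan : 2 / π * t ≤ Real.sin t := Real.mul_le_sin ht0.le ht2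
  have hlow : Real.log t ≤ f t := by
    show Real.log t ≤ Real.log |2 * Real.sin t|
    rw [habs]
    apply Real.log_le_log ht0
    have : 2 / π * t ≥ t * (1/2) := by
      rw [ge_iff_le, mul_comm (2/π) t]
      apply mul_le_mul_of_nonneg_left _ ht0.le
      rw [div_le_div_iff₀ (by norm_num) hπ]
      linarith [Real.pi_le_four]
    nlinarith
  have hlog2 : (0:ℝ) ≤ Real.log 2 := Real.log_nonneg (by norm_num)
  rw [Real.norm_eq_abs, abs_le]
  constructor
  · have := neg_log_le t ht0
    have : -(Real.log 2 + 2 * t ^ (-(1:ℝ)/2)) ≤ Real.log t := by linarith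
    linarith
  · linarith

lemma intInt {a b : ℝ} (ha : a ∈ Set.Icc (0:ℝ) (π/2)) (hb : b ∈ Set.Icc (0:ℝ) (π/2)) :
    IntervalIntegrable f volume a b := by
  rw [intervalIntegrable_iff]
  apply integrableOn_f.mono_set
  rw [Set.uIoc]
  exact Set.Ioc_subset_Ioc (le_min ha.1 hb.1) (max_le ha.2 hb.2)

/-- The a.e. product identity `log|2 sin 2u| = log|2 sin u| + log|2 cos u|`. -/
lemma ae_split : ∀ᵐ u : ℝ, f (2 * u) = f u + Real.log |2 * Real.cos u| := by
  have hcount : (({u : ℝ | Real.sin u = 0} ∪ {u : ℝ | Real.cos u = 0}) : Set ℝ).Countable := by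
    apply Set.Countable.union
    · have : {u : ℝ | Real.sin u = 0} ⊆ Set.range (fun n : ℤ => (n : ℝ) * π) := by
        intro u hu
        obtain ⟨n, hn⟩ := Real.sin_eq_zero_iff.1 hu
        exact ⟨n, hn⟩
      exact Set.Countable.mono this (Set.countable_range _)
    · have : {u : ℝ | Real.cos u = 0} ⊆ Set.range (fun n : ℤ => (2 * (n:ℝ) + 1) * π / 2) := by
        intro u hu
        obtain ⟨n, hn⟩ := Real.cos_eq_zero_iff.1 hu
        exact ⟨n, hn.symm⟩
      exact Set.Countable.mono this (Set.countable_range _)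
  have hnull := hcount.measure_zero (volume : Measure ℝ)
  rw [← MeasureTheory.compl_mem_ae_iff] at hnull
  filter_upwards [hnull] with u hu
  simp only [Set.mem_compl_iff, Set.mem_union, Set.mem_setOf_eq, not_or] at hu
  obtain ⟨hs, hc⟩ := hu
  have h1 : (2:ℝ) * Real.sin u ≠ 0 := by simp [hs]
  have h2 : (2:ℝ) * Real.cos u ≠ 0 := by simp [hc]
  have : |2 * Real.sin (2 * u)| = |2 * Real.sin u| * |2 * Real.cos u| := by
    rw [← abs_mul, Real.sin_two_mul]
    ring_nf
  show Real.log |2 * Real.sin (2 * u)| = Real.log |2 * Real.sin u| + Real.log |2 * Real.cos u|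
  rw [this, Real.log_mul (abs_ne_zero.2 h1) (abs_ne_zero.2 h2)]

/-- Duplication formula: for `θ ∈ [0, π/4]`,
`F(2θ) = 2 F(θ) + 2 (F(π/2) − F(π/2 − θ))`. -/
lemma duplication {θ : ℝ} (h0 : 0 ≤ θ) (h4 : θ ≤ π/4) :
    F (2 * θ) = 2 * F θ + 2 * (F (π/2) - F (π/2 - θ)) := by
  have hπ : (0:ℝ) < π := Real.pi_pos
  have step1 : F (2 * θ) = 2 * ∫ u in (0:ℝ)..θ, f (2 * u) := by
    show (∫ t in (0:ℝ)..(2*θ), f t) = _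
    rw [intervalIntegral.integral_comp_mul_left f (two_ne_zero)]
    norm_num
    ring
  have step2 : (∫ u in (0:ℝ)..θ, f (2 * u))
      = ∫ u in (0:ℝ)..θ, (f u + Real.log |2 * Real.cos u|) := by
    apply intervalIntegral.integral_congr_ae
    filter_upwards [ae_split] with u hu _
    exact hu
  have hfInt : IntervalIntegrable f volume 0 θ :=
    intInt (Set.mem_Icc.2 ⟨le_rfl, by linarith⟩) (Set.mem_Icc.2 ⟨by linarith, by linarith⟩)
  have hgCont : IntervalIntegrable (fun u => Real.log |2 * Real.cos u|) volume 0 θ := by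
    apply ContinuousOn.intervalIntegrable
    apply ContinuousOn.log
    · exact ((continuous_const.mul continuous_cos).abs).continuousOn
    · intro x hx
      rw [Set.uIcc_of_le h0] at hx
      have hcos : 0 < Real.cos x := by
        apply Real.cos_pos_of_mem_Ioo
        constructor <;> [linarith [hx.1]; linarith [hx.2, Real.pi_gt_three]]
      simp only [abs_ne_zero]
      positivity
  have step3 : (∫ u in (0:ℝ)..θ, (f u + Real.log |2 * Real.cos u|))
      = F θ + ∫ u in (0:ℝ)..θ, Real.log |2 * Real.cos u| :=
    intervalIntegral.integral_add hfInt hgCont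
  have step4 : (∫ u in (0:ℝ)..θ, Real.log |2 * Real.cos u|)
      = ∫ u in (π/2 - θ)..(π/2), f u := by
    have : (∫ u in (0:ℝ)..θ, Real.log |2 * Real.cos u|)
        = ∫ u in (0:ℝ)..θ, f (π/2 - u) := by
      apply intervalIntegral.integral_congr
      intro x _
      show Real.log |2 * Real.cos x| = Real.log |2 * Real.sin (π/2 - x)|
      rw [Real.sin_pi_div_two_sub]
    rw [this, intervalIntegral.integral_comp_sub_left f (π/2)]
    norm_num
  have step5 : (∫ u in (π/2 - θ)..(π/2), f u) = F (π/2) - F (π/2 - θ) := by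
    have h := intervalIntegral.integral_interval_sub_left (a := (0:ℝ)) (b := π/2) (c := π/2 - θ)
      (intInt (Set.mem_Icc.2 ⟨by linarith, by linarith⟩) (Set.mem_Icc.2 ⟨by linarith, by linarith⟩))
      (intInt (Set.mem_Icc.2 ⟨by linarith, by linarith⟩) (Set.mem_Icc.2 ⟨by linarith, by linarith⟩))
    exact h.symm
  rw [step1, step2, step3, step4, step5]
  ring

lemma F_pi_div_two : F (π/2) = 0 := by
  have hπ : (0:ℝ) < π := Real.pi_pos
  have := duplication (θ := π/4) (by linarith) le_rfl
  have h2 : 2 * (π/4) = π/2 := by ring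
  have h3 : π/2 - π/4 = π/4 := by ring
  rw [h2, h3] at this
  linarith

end LobAux

/-- The two expressions for the volume of the regular ideal hyperbolic
tetrahedron agree: `v_tet = 2Λ(π/6) = 3Λ(π/3)`. -/
theorem two_lambda_pi_six_eq_three_lambda_pi_three :
    2 * lobachevsky (π / 6) = 3 * lobachevsky (π / 3) := by
  have hπ : (0:ℝ) < π := Real.pi_pos
  have hdup := LobAux.duplication (θ := π/6) (by linarith) (by linarith)
  have h2 : 2 * (π/6) = π/3 := by ring
  have h3 : π/2 - π/6 = π/3 := by ring
  rw [h2, h3, LobAux.F_pi_div_two] at hdup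
  rw [LobAux.lob_eq, LobAux.lob_eq]
  linarith
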